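/- Let a ≥ 2 and b, b' ≥ 1 be integers. Let N (respectively N') be the subgroup of ℤ × ℤ generated by (b, a−1) (respectively (b', a−1)), let G = (ℤ×ℤ)/N and G' = (ℤ×ℤ)/N', let ι : ℤ → G and ι' : ℤ → G' be the homomorphisms x ↦ [(x, 0)], and let π : G → ℤ/(a−1)ℤ and π' : G' → ℤ/(a−1)ℤ be the homomorphisms induced by (x, y) ↦ y mod (a−1) (well defined since a−1 ≡ 0 mod (a−1)). Then there exist group isomorphisms α : ℤ → ℤ, β : G → G', and γ : ℤ/(a−1)ℤ → ℤ/(a−1)ℤ with β ∘ ι = ι' ∘ α and π' ∘ β = γ ∘ π if and only if there exists a unit z of the ring ℤ/(a−1)ℤ such that b ≡ z·b' in ℤ/(a−1)ℤ. -/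

import Mathlib

private def lmap (t u : ℤ) : ℤ × ℤ →+ ℤ × ℤ where
  toFun p := (p.1 + t * p.2, u * p.2)
  map_zero' := by simp
  map_add' p q := by
    simp only [Prod.mk_add_mk, Prod.ext_iff, Prod.fst_add, Prod.snd_add]
    constructor <;> ring

/-- Let `a ≥ 2` and `b, b' ≥ 1` be integers, let `N` (resp. `N'`) be the
subgroup of `ℤ × ℤ` generated by `(b, a-1)` (resp. `(b', a-1)`), let
`G = (ℤ × ℤ)/N` and `G' = (ℤ × ℤ)/N'`, let `ι, ι'` be the maps `x ↦ [(x, 0)]`,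
and let `π, π'` be the maps induced by `(x, y) ↦ y mod (a-1)`.  Then there are
group isomorphisms `α : ℤ → ℤ`, `β : G → G'`, `γ : ℤ/(a-1) → ℤ/(a-1)` with
`β ∘ ι = ι' ∘ α` and `π' ∘ β = γ ∘ π` if and only if there is a unit `z` of
`ℤ/(a-1)` with `b = z * b'` in `ℤ/(a-1)`. -/
theorem extension_iso_iff_unit_mul (a b b' : ℤ)
    (ha : 2 ≤ a) (hb : 1 ≤ b) (hb' : 1 ≤ b')
    (N N' : AddSubgroup (ℤ × ℤ))
    (hN : N = AddSubgroup.closure {(b, a - 1)})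
    (hN' : N' = AddSubgroup.closure {(b', a - 1)})
    (ι : ℤ →+ (ℤ × ℤ) ⧸ N)
    (hι : ∀ x : ℤ, ι x = QuotientAddGroup.mk (x, (0 : ℤ)))
    (ι' : ℤ →+ (ℤ × ℤ) ⧸ N')
    (hι' : ∀ x : ℤ, ι' x = QuotientAddGroup.mk (x, (0 : ℤ)))
    (π : (ℤ × ℤ) ⧸ N →+ ZMod (a - 1).toNat)
    (hπ : ∀ x y : ℤ, π (QuotientAddGroup.mk (x, y)) = (y : ZMod (a - 1).toNat))
    (π' : (ℤ × ℤ) ⧸ N' →+ ZMod (a - 1).toNat)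
    (hπ' : ∀ x y : ℤ, π' (QuotientAddGroup.mk (x, y)) = (y : ZMod (a - 1).toNat)) :
    (∃ (α : ℤ ≃+ ℤ) (β : ((ℤ × ℤ) ⧸ N) ≃+ ((ℤ × ℤ) ⧸ N'))
        (γ : ZMod (a - 1).toNat ≃+ ZMod (a - 1).toNat),
      (∀ x : ℤ, β (ι x) = ι' (α x)) ∧
      (∀ g : (ℤ × ℤ) ⧸ N, π' (β g) = γ (π g))) ↔
    (∃ z : ZMod (a - 1).toNat, IsUnit z ∧
      (b : ZMod (a - 1).toNat) = z * (b' : ZMod (a - 1).toNat)) := by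
  have hcast : (((a - 1).toNat : ℤ)) = a - 1 := Int.toNat_of_nonneg (by omega)
  have hane : a - 1 ≠ 0 := by omega
  have hA0 : ((a - 1 : ℤ) : ZMod (a - 1).toNat) = 0 := by
    rw [← hcast]
    exact_mod_cast ZMod.natCast_self (a - 1).toNat
  haveI : NeZero (a - 1).toNat := ⟨by omega⟩
  constructor
  · rintro ⟨α, β, γ, hc1, hc2⟩
    have hα : ∀ x : ℤ, α x = x * α 1 := by
      intro x
      calc α x = α (x • (1 : ℤ)) := by rw [smul_eq_mul, mul_one]
      _ = x • α 1 := map_zsmul α x 1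
      _ = x * α 1 := by rw [smul_eq_mul]
    have hunitε : α 1 = 1 ∨ α 1 = -1 := by
      have h1 : α (α.symm 1) = 1 := α.apply_symm_apply 1
      rw [hα (α.symm 1)] at h1
      exact Int.isUnit_iff.mp (IsUnit.of_mul_eq_one _ ((mul_comm _ _).trans h1))
    obtain ⟨p, hp⟩ :=
      QuotientAddGroup.mk_surjective (β (QuotientAddGroup.mk ((0 : ℤ), (1 : ℤ))))
    have hmem : ((b, a - 1) : ℤ × ℤ) ∈ N := by
      rw [hN]; exact AddSubgroup.subset_closure rfl
    have h0 : (QuotientAddGroup.mk (b, a - 1) : (ℤ × ℤ) ⧸ N) = 0 :=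
      (QuotientAddGroup.eq_zero_iff _).mpr hmem
    have hsplit : ((b, a - 1) : ℤ × ℤ) = (b, 0) + (a - 1) • ((0 : ℤ), (1 : ℤ)) := by
      simp [Prod.ext_iff]
    have key : (QuotientAddGroup.mk ((α b, 0) + (a - 1) • p) : (ℤ × ℤ) ⧸ N') = 0 := by
      have h2 : β (QuotientAddGroup.mk (b, a - 1)) = 0 := by rw [h0, map_zero]
      rw [hsplit, QuotientAddGroup.mk_add, QuotientAddGroup.mk_zsmul, map_add,
        map_zsmul, ← hι, hc1, hι', ← hp] at h2
      rw [QuotientAddGroup.mk_add, QuotientAddGroup.mk_zsmul]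
      exact h2
    have hmem' := (QuotientAddGroup.eq_zero_iff _).mp key
    rw [hN', AddSubgroup.mem_closure_singleton] at hmem'
    obtain ⟨k, hk⟩ := hmem'
    have hk1 : k * b' = α b + (a - 1) * p.1 := by
      have := congrArg Prod.fst hk
      simpa [smul_eq_mul] using this
    have hk2 : k * (a - 1) = (a - 1) * p.2 := by
      have := congrArg Prod.snd hk
      simpa [smul_eq_mul] using this
    have hkp : k = p.2 := by
      have h3 : (a - 1) * k = (a - 1) * p.2 := by linarith
      exact mul_left_cancel₀ hane h3
    have hint : p.2 * b' = b * α 1 + (a - 1) * p.1 := by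
      rw [← hkp, ← hα b]; exact hk1
    have hγunit : IsUnit (γ 1) := by
      obtain ⟨c, hc⟩ := γ.surjective 1
      obtain ⟨d, hd⟩ := ZMod.intCast_surjective (n := (a - 1).toNat) c
      refine IsUnit.of_mul_eq_one ((d : ZMod (a - 1).toNat)) ?_
      rw [mul_comm]
      calc (d : ZMod (a - 1).toNat) * γ 1 = d • γ 1 := by rw [zsmul_eq_mul]
      _ = γ (d • 1) := (map_zsmul γ d 1).symm
      _ = γ c := by rw [show d • (1 : ZMod (a - 1).toNat) = c by rw [zsmul_eq_mul, mul_one, hd]]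
      _ = 1 := hc
    have hp2 : ((p.2 : ℤ) : ZMod (a - 1).toNat) = γ 1 := by
      have h1 : π' (QuotientAddGroup.mk p) = (p.2 : ZMod (a - 1).toNat) := hπ' p.1 p.2
      rw [hp, hc2, hπ 0 1] at h1
      simpa using h1.symm
    have hz2 : ((p.2 : ℤ) : ZMod (a - 1).toNat) * (b' : ZMod (a - 1).toNat)
        = (b : ZMod (a - 1).toNat) * ((α 1 : ℤ) : ZMod (a - 1).toNat) := by
      have h4 := congrArg (fun x : ℤ => (x : ZMod (a - 1).toNat)) hint
      push_cast at h4 hA0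
      linear_combination h4 + (p.1 : ZMod (a - 1).toNat) * hA0
    refine ⟨((α 1 * p.2 : ℤ) : ZMod (a - 1).toNat), ?_, ?_⟩
    · rcases hunitε with h | h
      · rw [h]
        have h5 : ((1 * p.2 : ℤ) : ZMod (a - 1).toNat) = γ 1 := by rw [one_mul, hp2]
        rw [h5]; exact hγunit
      · rw [h]
        have h5 : ((-1 * p.2 : ℤ) : ZMod (a - 1).toNat) = -(γ 1) := by
          rw [← hp2]; push_cast; ring
        rw [h5]; exact hγunit.neg
    · have hε2 : ((α 1 : ℤ) : ZMod (a - 1).toNat) * ((α 1 : ℤ) : ZMod (a - 1).toNat) = 1 := by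
        rcases hunitε with h | h <;> rw [h] <;> push_cast <;> ring
      push_cast
      linear_combination -((α 1 : ℤ) : ZMod (a - 1).toNat) * hz2 - (b : ZMod (a - 1).toNat) * hε2
  · rintro ⟨z, hz, hzb⟩
    obtain ⟨v, hv⟩ := hz.exists_right_inv
    obtain ⟨u, hu⟩ := ZMod.intCast_surjective (n := (a - 1).toNat) z
    obtain ⟨u', hu'⟩ := ZMod.intCast_surjective (n := (a - 1).toNat) v
    have d1 : (a - 1) ∣ u * u' - 1 := by
      rw [← hcast, ← ZMod.intCast_zmod_eq_zero_iff_dvd]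
      push_cast
      rw [hu, hu', hv]
      ring
    have d2 : (a - 1) ∣ u * b' - b := by
      rw [← hcast, ← ZMod.intCast_zmod_eq_zero_iff_dvd]
      push_cast
      rw [hu, ← hzb]
      ring
    have d3 : (a - 1) ∣ u' * b - b' := by
      rw [← hcast, ← ZMod.intCast_zmod_eq_zero_iff_dvd]
      push_cast
      rw [hu', hzb, ← mul_assoc, mul_comm v z, hv, one_mul]
      ring
    obtain ⟨m, hm⟩ := d1
    obtain ⟨t, ht⟩ := d2
    obtain ⟨t', ht'⟩ := d3
    have htt1 : t + t' * u = m * b := by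
      refine mul_left_cancel₀ hane ?_
      linear_combination (-1 : ℤ) * ht - u * ht' + b * hm
    have htt2 : t' + t * u' = m * b' := by
      refine mul_left_cancel₀ hane ?_
      linear_combination (-1 : ℤ) * ht' - u' * ht + b' * hm
    have hker : N ≤ ((QuotientAddGroup.mk' N').comp (lmap t u)).ker := by
      rw [hN, AddSubgroup.closure_le]
      intro p hp
      rw [Set.mem_singleton_iff] at hp
      subst hp
      simp only [SetLike.mem_coe, AddMonoidHom.mem_ker, AddMonoidHom.comp_apply,
        QuotientAddGroup.mk'_apply]
      rw [QuotientAddGroup.eq_zero_iff, hN', AddSubgroup.mem_closure_singleton]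
      refine ⟨u, ?_⟩
      show (u • b', u • (a - 1)) = ((b, a - 1).1 + t * (b, a - 1).2, u * (b, a - 1).2)
      simp only [smul_eq_mul, Prod.mk.injEq]
      constructor
      · linarith [ht]
      · trivial
    have hker' : N' ≤ ((QuotientAddGroup.mk' N).comp (lmap t' u')).ker := by
      rw [hN', AddSubgroup.closure_le]
      intro p hp
      rw [Set.mem_singleton_iff] at hp
      subst hp
      simp only [SetLike.mem_coe, AddMonoidHom.mem_ker, AddMonoidHom.comp_apply,
        QuotientAddGroup.mk'_apply]
      rw [QuotientAddGroup.eq_zero_iff, hN, AddSubgroup.mem_closure_singleton]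
      refine ⟨u', ?_⟩
      show (u' • b, u' • (a - 1)) = ((b', a - 1).1 + t' * (b', a - 1).2, u' * (b', a - 1).2)
      simp only [smul_eq_mul, Prod.mk.injEq]
      constructor
      · linarith [ht']
      · trivial
    set βf := QuotientAddGroup.lift N ((QuotientAddGroup.mk' N').comp (lmap t u)) hker with hβf
    set βg := QuotientAddGroup.lift N' ((QuotientAddGroup.mk' N).comp (lmap t' u')) hker' with hβg
    have hβfmk : ∀ p : ℤ × ℤ, βf (QuotientAddGroup.mk p)
        = QuotientAddGroup.mk (p.1 + t * p.2, u * p.2) := fun p => rfl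
    have hβgmk : ∀ p : ℤ × ℤ, βg (QuotientAddGroup.mk p)
        = QuotientAddGroup.mk (p.1 + t' * p.2, u' * p.2) := fun p => rfl
    have hleft : ∀ g : (ℤ × ℤ) ⧸ N, βg (βf g) = g := by
      intro g
      refine QuotientAddGroup.induction_on g ?_
      intro p
      rw [hβfmk, hβgmk]
      rw [QuotientAddGroup.eq, hN, AddSubgroup.mem_closure_singleton]
      refine ⟨-(m * p.2), ?_⟩
      have e1 : -(m * p.2) * b = -((p.1 + t * p.2 + t' * (u * p.2))) + p.1 := by
        linear_combination (p.2 : ℤ) * htt1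
      have e2 : -(m * p.2) * (a - 1) = -(u' * (u * p.2)) + p.2 := by
        linear_combination (p.2 : ℤ) * hm
      show (-(m * p.2) * b, -(m * p.2) * (a - 1)) = _
      rw [e1, e2]
      rfl
    have hright : ∀ g : (ℤ × ℤ) ⧸ N', βf (βg g) = g := by
      intro g
      refine QuotientAddGroup.induction_on g ?_
      intro p
      rw [hβgmk, hβfmk]
      rw [QuotientAddGroup.eq, hN', AddSubgroup.mem_closure_singleton]
      refine ⟨-(m * p.2), ?_⟩
      have e1 : -(m * p.2) * b' = -((p.1 + t' * p.2 + t * (u' * p.2))) + p.1 := by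
        linear_combination (p.2 : ℤ) * htt2
      have e2 : -(m * p.2) * (a - 1) = -(u * (u' * p.2)) + p.2 := by
        linear_combination (p.2 : ℤ) * hm
      show (-(m * p.2) * b', -(m * p.2) * (a - 1)) = _
      rw [e1, e2]
      rfl
    refine ⟨AddEquiv.refl ℤ,
      { toFun := βf, invFun := βg, left_inv := hleft, right_inv := hright,
        map_add' := βf.map_add },
      { toFun := fun c => z * c, invFun := fun c => v * c,
        left_inv := fun c => by
          show v * (z * c) = c
          rw [← mul_assoc, mul_comm v z, hv, one_mul],
        right_inv := fun c => by
          show z * (v * c) = c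
          rw [← mul_assoc, hv, one_mul],
        map_add' := fun x y => mul_add z x y }, ?_, ?_⟩
    · intro x
      rw [hι, hι']
      show βf (QuotientAddGroup.mk (x, 0)) = QuotientAddGroup.mk ((AddEquiv.refl ℤ) x, (0 : ℤ))
      rw [hβfmk]
      norm_num
    · intro g
      refine QuotientAddGroup.induction_on g ?_
      intro p
      show π' (βf (QuotientAddGroup.mk p)) = z * π (QuotientAddGroup.mk p)
      rw [hβfmk, hπ' (p.1 + t * p.2) (u * p.2), show (QuotientAddGroup.mk p : (ℤ × ℤ) ⧸ N) = QuotientAddGroup.mk (p.1, p.2) from rfl, hπ p.1 p.2]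
      push_cast
      rw [hu]
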